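/- Under Assumption 1, for any initial distribution p₀ ∈ P(𝓜) and any mutant distribution q ∈ P(𝓜): if there exists a Borel measurable function f on 𝓜 such that p*(dx) = f(x) q(dx) (i.e. p* is absolutely continuous with respect to q), then (p_i)_{i≥0} converges in total variation to p*. -/

import Mathlib

open MeasureTheory Set Filter

/-- Selective advantage `s(x,u) = w(x,u) / ∫ w(y,u) u(dy)` if the mean fitness is
positive, and `1` otherwise. -/
noncomputable def sel (w : ℝ → MeasureTheory.Measure ℝ → ℝ)
    (u : MeasureTheory.Measure ℝ) (x : ℝ) : ℝ :=
  if 0 < ∫ y, w y u ∂u then w x u / ∫ y, w y u ∂u else 1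

/-- The sequence of type distributions:
`p_i(dx) = (1-β) s(x,p_{i-1}) p_{i-1}(dx) + β q(dx)`. -/
noncomputable def evol (w : ℝ → MeasureTheory.Measure ℝ → ℝ) (β : ℝ)
    (q p₀ : MeasureTheory.Measure ℝ) : ℕ → MeasureTheory.Measure ℝ
  | 0 => p₀
  | i + 1 =>
      ENNReal.ofReal (1 - β) •
          ((evol w β q p₀ i).withDensity fun x =>
            ENNReal.ofReal (sel w (evol w β q p₀ i) x))
        + ENNReal.ofReal β • q

/-- Convergence in total variation (uniform convergence over all measurable sets). -/
def TendstoTV (p : ℕ → MeasureTheory.Measure ℝ) (μ : MeasureTheory.Measure ℝ) : Prop :=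
  ∀ ε : ℝ, 0 < ε → ∃ N : ℕ, ∀ i ≥ N, ∀ A : Set ℝ, MeasurableSet A →
    |((p i) A).toReal - (μ A).toReal| < ε

/-- Weak convergence of measures (tested against bounded continuous functions). -/
def TendstoWeak (p : ℕ → MeasureTheory.Measure ℝ) (μ : MeasureTheory.Measure ℝ) : Prop :=
  ∀ f : BoundedContinuousFunction ℝ ℝ,
    Filter.Tendsto (fun i => ∫ x, f x ∂(p i)) Filter.atTop (nhds (∫ x, f x ∂μ))

/-- Assumption 1: if `v` restricted to `[0,M)` is a component of `u` restricted to `[0,M)`,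
then `s(·,u) ≥ s(·,v)` on `[0,M]`. -/
def Assumption1 (M : ℝ) (w : ℝ → MeasureTheory.Measure ℝ → ℝ) : Prop :=
  ∀ u v : MeasureTheory.Measure ℝ,
    IsProbabilityMeasure u → IsProbabilityMeasure v →
    u ((Set.Icc 0 M)ᶜ) = 0 → v ((Set.Icc 0 M)ᶜ) = 0 →
    v.restrict (Set.Ico 0 M) ≤ u.restrict (Set.Ico 0 M) →
    ∀ x ∈ Set.Icc (0:ℝ) M, sel w v x ≤ sel w u x

/-- Assumption 2: for every `0 ≤ a < M` and `0 < ε < 1` there is `c(a,ε) > 1` such that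
`s(M,u) ≥ c(a,ε) s(M,v)` whenever `v_{[0,M)} ≺ u_{[0,M)}` and `D_u(a) ≥ D_v(a) + ε`. -/
def Assumption2 (M : ℝ) (w : ℝ → MeasureTheory.Measure ℝ → ℝ) : Prop :=
  ∀ a : ℝ, 0 ≤ a → a < M → ∀ ε : ℝ, 0 < ε → ε < 1 → ∃ c : ℝ, 1 < c ∧
    ∀ u v : MeasureTheory.Measure ℝ,
      IsProbabilityMeasure u → IsProbabilityMeasure v →
      u ((Set.Icc 0 M)ᶜ) = 0 → v ((Set.Icc 0 M)ᶜ) = 0 →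
      v.restrict (Set.Ico 0 M) ≤ u.restrict (Set.Ico 0 M) →
      (v (Set.Icc 0 a)).toReal + ε ≤ (u (Set.Icc 0 a)).toReal →
      c * sel w v M ≤ sel w u M

lemma sel_nonneg (w : ℝ → Measure ℝ → ℝ) (hw : ∀ x u, 0 ≤ w x u) (u : Measure ℝ) (x : ℝ) :
    0 ≤ sel w u x := by
  unfold sel; split
  · exact div_nonneg (hw x u) (le_of_lt ‹_›)
  · exact zero_le_one

lemma sel_meas (w : ℝ → Measure ℝ → ℝ) (u : Measure ℝ) (hw : Measurable fun x => w x u) :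
    Measurable fun x => ENNReal.ofReal (sel w u x) := by
  unfold sel; split
  · exact (hw.div_const _).ennreal_ofReal
  · exact measurable_const

lemma lintegral_sel (w : ℝ → Measure ℝ → ℝ) (hw_nonneg : ∀ x u, 0 ≤ w x u)
    (hw_meas : ∀ u, Measurable fun x => w x u)
    (u : Measure ℝ) [IsProbabilityMeasure u] :
    ∫⁻ x, ENNReal.ofReal (sel w u x) ∂u = 1 := by
  unfold sel
  split
  case isTrue h =>
    have hint : Integrable (fun y => w y u) u := by
      by_contra hni
      rw [integral_undef hni] at h; exact lt_irrefl 0 h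
    have key : ENNReal.ofReal (∫ y, w y u ∂u) = ∫⁻ y, ENNReal.ofReal (w y u) ∂u :=
      ofReal_integral_eq_lintegral_ofReal hint (Eventually.of_forall fun x => hw_nonneg x u)
    have hdiv : ∀ x : ℝ, ENNReal.ofReal (w x u / ∫ y, w y u ∂u)
        = ENNReal.ofReal (w x u) * (ENNReal.ofReal (∫ y, w y u ∂u))⁻¹ := by
      intro x
      rw [div_eq_mul_inv, ENNReal.ofReal_mul (hw_nonneg x u), ENNReal.ofReal_inv_of_pos h]
    simp_rw [hdiv]
    rw [lintegral_mul_const' _ _ (by simpa using h), ← key,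
      ENNReal.mul_inv_cancel (by simpa using h) ENNReal.ofReal_ne_top]
  case isFalse h =>
    simp

lemma evol_succ (w : ℝ → Measure ℝ → ℝ) (β : ℝ) (q p₀ : Measure ℝ) (i : ℕ) :
    evol w β q p₀ (i+1) =
      ENNReal.ofReal (1 - β) •
          ((evol w β q p₀ i).withDensity fun x =>
            ENNReal.ofReal (sel w (evol w β q p₀ i) x))
        + ENNReal.ofReal β • q := rfl

lemma evol_prob_supp (M β : ℝ) (hβ : β ∈ Set.Ioo (0:ℝ) 1) (q : Measure ℝ)
    [IsProbabilityMeasure q] (hq : q ((Set.Icc 0 M)ᶜ) = 0)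
    (w : ℝ → Measure ℝ → ℝ) (hw_nonneg : ∀ x u, 0 ≤ w x u)
    (hw_meas : ∀ u, Measurable fun x => w x u)
    (p₀ : Measure ℝ) [IsProbabilityMeasure p₀] (hp₀ : p₀ ((Set.Icc 0 M)ᶜ) = 0) :
    ∀ i, IsProbabilityMeasure (evol w β q p₀ i) ∧ (evol w β q p₀ i) ((Set.Icc 0 M)ᶜ) = 0 := by
  intro i
  induction i with
  | zero =>
    rw [show evol w β q p₀ 0 = p₀ from rfl]
    exact ⟨inferInstance, hp₀⟩
  | succ i ih =>
    obtain ⟨hprob, hsupp⟩ := ih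
    haveI := hprob
    set p := evol w β q p₀ i with hp
    constructor
    · constructor
      rw [evol_succ]
      simp only [Measure.add_apply, Measure.smul_apply, smul_eq_mul]
      rw [withDensity_apply _ MeasurableSet.univ, Measure.restrict_univ,
        lintegral_sel w hw_nonneg hw_meas p, measure_univ, mul_one, mul_one,
        ← ENNReal.ofReal_add (by linarith [hβ.2]) (le_of_lt hβ.1)]
      norm_num
    · rw [evol_succ]
      simp only [Measure.add_apply, Measure.smul_apply, smul_eq_mul]
      rw [withDensity_apply _ measurableSet_Icc.compl,
        setLIntegral_measure_zero _ _ hsupp, hq]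
      simp

lemma evol_dom (M : ℝ) (hM : 0 < M) (β : ℝ) (hβ : β ∈ Set.Ioo (0:ℝ) 1) (q : Measure ℝ)
    [IsProbabilityMeasure q] (hq : q ((Set.Icc 0 M)ᶜ) = 0)
    (w : ℝ → Measure ℝ → ℝ) (hw_nonneg : ∀ x u, 0 ≤ w x u)
    (hw_meas : ∀ u, Measurable fun x => w x u) (hA1 : Assumption1 M w)
    (p₀ : Measure ℝ) [IsProbabilityMeasure p₀] (hp₀ : p₀ ((Set.Icc 0 M)ᶜ) = 0) :
    ∀ i, (evol w β q (Measure.dirac M) i).restrict (Set.Ico 0 M)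
        ≤ (evol w β q p₀ i).restrict (Set.Ico 0 M) := by
  have hdsupp : (Measure.dirac M) ((Set.Icc 0 M)ᶜ) = 0 := by
    rw [Measure.dirac_apply' _ measurableSet_Icc.compl]
    simp [le_of_lt hM]
  intro i
  induction i with
  | zero =>
    rw [show evol w β q (Measure.dirac M) 0 = Measure.dirac M from rfl]
    have h0 : (Measure.dirac M).restrict (Set.Ico 0 M) = 0 := by
      rw [Measure.restrict_eq_zero, Measure.dirac_apply' _ measurableSet_Ico]
      simp
    rw [h0]
    exact Measure.zero_le _
  | succ i ih =>
    set ph := evol w β q (Measure.dirac M) i with hph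
    set p := evol w β q p₀ i with hpd
    obtain ⟨hprobh, hsupph⟩ := evol_prob_supp M β hβ q hq w hw_nonneg hw_meas
      (Measure.dirac M) hdsupp i
    obtain ⟨hprob, hsupp⟩ := evol_prob_supp M β hβ q hq w hw_nonneg hw_meas p₀ hp₀ i
    haveI := hprobh; haveI := hprob
    have hsel : ∀ x ∈ Set.Ico (0:ℝ) M, sel w ph x ≤ sel w p x := fun x hx =>
      hA1 p ph hprob hprobh hsupp hsupph ih x (Set.Ico_subset_Icc_self hx)
    rw [Measure.le_iff]
    intro s hs
    rw [evol_succ, evol_succ]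
    simp only [Measure.restrict_apply hs, Measure.add_apply, Measure.smul_apply, smul_eq_mul]
    gcongr _ * ?_ + _
    rw [withDensity_apply _ (hs.inter measurableSet_Ico),
      withDensity_apply _ (hs.inter measurableSet_Ico)]
    calc ∫⁻ x in s ∩ Set.Ico 0 M, ENNReal.ofReal (sel w ph x) ∂ph
        ≤ ∫⁻ x in s ∩ Set.Ico 0 M, ENNReal.ofReal (sel w p x) ∂ph := by
          refine setLIntegral_mono (sel_meas w p (hw_meas p)) fun x hx => ?_
          exact ENNReal.ofReal_le_ofReal (hsel x hx.2)
      _ ≤ ∫⁻ x in s ∩ Set.Ico 0 M, ENNReal.ofReal (sel w p x) ∂p := by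
          have hr : ph.restrict (s ∩ Set.Ico 0 M) ≤ p.restrict (s ∩ Set.Ico 0 M) := by
            have := Measure.restrict_mono (subset_refl s) ih
            rwa [Measure.restrict_restrict hs, Measure.restrict_restrict hs] at this
          exact lintegral_mono' hr le_rfl

lemma evol_singleton (β : ℝ) (hβ : β ∈ Set.Ioo (0:ℝ) 1) (q p₀ : Measure ℝ)
    (w : ℝ → Measure ℝ → ℝ) (hw_nonneg : ∀ x u, 0 ≤ w x u) (M : ℝ) (i : ℕ)
    [IsFiniteMeasure (evol w β q p₀ i)] [IsFiniteMeasure q] :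
    ((evol w β q p₀ (i+1)) {M}).toReal
      = (1-β) * sel w (evol w β q p₀ i) M * ((evol w β q p₀ i) {M}).toReal
        + β * (q {M}).toReal := by
  set p := evol w β q p₀ i
  rw [evol_succ]
  simp only [Measure.add_apply, Measure.smul_apply, smul_eq_mul]
  rw [withDensity_apply _ (measurableSet_singleton M), lintegral_singleton]
  rw [ENNReal.toReal_add, ENNReal.toReal_mul, ENNReal.toReal_mul, ENNReal.toReal_mul,
    ENNReal.toReal_ofReal (by linarith [hβ.2]), ENNReal.toReal_ofReal (le_of_lt hβ.1),
    ENNReal.toReal_ofReal (sel_nonneg w hw_nonneg p M), mul_assoc]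
  · exact ENNReal.mul_ne_top ENNReal.ofReal_ne_top
      (ENNReal.mul_ne_top ENNReal.ofReal_ne_top (measure_ne_top p _))
  · exact ENNReal.mul_ne_top ENNReal.ofReal_ne_top (measure_ne_top q _)

lemma mass_M (M : ℝ) (hM : 0 < M) (p : Measure ℝ) [IsProbabilityMeasure p]
    (hsupp : p ((Set.Icc 0 M)ᶜ) = 0) :
    (p {M}).toReal = 1 - (p (Set.Ico 0 M)).toReal := by
  have hIcc : p (Set.Icc 0 M) = 1 := by
    have h2 : p (Set.Icc 0 M) + p ((Set.Icc 0 M)ᶜ) = p Set.univ :=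
      measure_add_measure_compl measurableSet_Icc
    rw [hsupp, add_zero, measure_univ] at h2
    exact h2
  have hunion : p (Set.Ico 0 M) + p {M} = 1 := by
    rw [← measure_union (by simp [Set.disjoint_left]; exact fun a _ h => ne_of_lt h) (measurableSet_singleton M),
      Set.Ico_union_right (le_of_lt hM), hIcc]
  have := congrArg ENNReal.toReal hunion
  rw [ENNReal.toReal_add (measure_ne_top _ _) (measure_ne_top _ _)] at this
  simp at this
  linarith

lemma tv_bound (M : ℝ) (hM : 0 < M) (ph p : Measure ℝ)
    [IsProbabilityMeasure ph] [IsProbabilityMeasure p]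
    (hsupph : ph ((Set.Icc 0 M)ᶜ) = 0) (hsupp : p ((Set.Icc 0 M)ᶜ) = 0)
    (hdom : ph.restrict (Set.Ico 0 M) ≤ p.restrict (Set.Ico 0 M))
    (A : Set ℝ) (hA : MeasurableSet A) :
    |(p A).toReal - (ph A).toReal| ≤ (ph {M}).toReal - (p {M}).toReal := by
  have hdom' : ∀ B : Set ℝ, MeasurableSet B → (ph (B ∩ Set.Ico 0 M)).toReal ≤ (p (B ∩ Set.Ico 0 M)).toReal := by
    intro B hB
    have := Measure.le_iff.mp hdom B hB
    rw [Measure.restrict_apply hB, Measure.restrict_apply hB] at this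
    exact (ENNReal.toReal_le_toReal (measure_ne_top _ _) (measure_ne_top _ _)).mpr this
  set I := Set.Ico (0:ℝ) M with hI
  have hdisj : Disjoint I {M} := by
    rw [Set.disjoint_left]
    rintro a ha rfl
    exact lt_irrefl _ ha.2
  have decompose : ∀ r : Measure ℝ, IsProbabilityMeasure r → r ((Set.Icc 0 M)ᶜ) = 0 →
      (r A).toReal = (r (A ∩ I)).toReal + (r (A ∩ {M})).toReal ∧
      (r (A ∩ I)).toReal + (r (I \ A)).toReal = 1 - (r {M}).toReal := by
    intro r hr hrs
    haveI := hr
    constructor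
    · have h1 : r (A ∩ Set.Icc 0 M) + r (A \ Set.Icc 0 M) = r A :=
        measure_inter_add_diff A measurableSet_Icc
      have h2 : r (A \ Set.Icc 0 M) = 0 :=
        measure_mono_null (fun x hx => hx.2) hrs
      rw [h2, add_zero] at h1
      have h3 : A ∩ Set.Icc 0 M = (A ∩ I) ∪ (A ∩ {M}) := by
        rw [← Set.inter_union_distrib_left, Set.Ico_union_right (le_of_lt hM)]
      have h4 : r (A ∩ Set.Icc 0 M) = r (A ∩ I) + r (A ∩ {M}) := by
        rw [h3, measure_union (hdisj.mono Set.inter_subset_right Set.inter_subset_right)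
          (hA.inter (measurableSet_singleton M))]
      rw [← h1, h4, ENNReal.toReal_add (measure_ne_top _ _) (measure_ne_top _ _)]
    · have h1 : r (I ∩ A) + r (I \ A) = r I := measure_inter_add_diff I hA
      have h2 := congrArg ENNReal.toReal h1
      rw [ENNReal.toReal_add (measure_ne_top _ _) (measure_ne_top _ _)] at h2
      have h3 := mass_M M hM r hrs
      rw [Set.inter_comm] at h2
      rw [← hI] at h3
      linarith
  obtain ⟨hA1p, hA2p⟩ := decompose p ‹_› hsupp
  obtain ⟨hA1h, hA2h⟩ := decompose ph ‹_› hsupph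
  have hIA := hdom' A hA
  have hID : (ph (I \ A)).toReal ≤ (p (I \ A)).toReal := by
    have := hdom' Aᶜ hA.compl
    rwa [show Aᶜ ∩ Set.Ico 0 M = I \ A by rw [Set.diff_eq_compl_inter]] at this
  by_cases hMA : M ∈ A
  · have hAM : A ∩ {M} = {M} := Set.inter_eq_right.mpr (Set.singleton_subset_iff.mpr hMA)
    rw [hAM] at hA1p hA1h
    rw [abs_le]
    constructor <;> linarith
  · have hAM : A ∩ {M} = (∅ : Set ℝ) := by
      rw [Set.inter_singleton_eq_empty.mpr hMA]
    rw [hAM] at hA1p hA1h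
    simp only [measure_empty, ENNReal.toReal_zero, add_zero] at hA1p hA1h
    rw [abs_le]
    constructor <;> linarith

theorem stmt9' (M : ℝ) (hM : 0 < M) (β : ℝ) (hβ : β ∈ Set.Ioo (0:ℝ) 1)
    (q : MeasureTheory.Measure ℝ) [IsProbabilityMeasure q] (hq : q ((Set.Icc 0 M)ᶜ) = 0)
    (w : ℝ → MeasureTheory.Measure ℝ → ℝ)
    (hw_nonneg : ∀ x u, 0 ≤ w x u)
    (hw_meas : ∀ u, Measurable fun x => w x u)
    (hA1 : Assumption1 M w)
    (pstar : MeasureTheory.Measure ℝ) [IsProbabilityMeasure pstar]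
    (hpstar : ∀ ε : ℝ, 0 < ε → ∃ N : ℕ, ∀ i ≥ N, ∀ A : Set ℝ, MeasurableSet A →
      |((evol w β q (MeasureTheory.Measure.dirac M) i) A).toReal - (pstar A).toReal| < ε)
    (p₀ : MeasureTheory.Measure ℝ) [IsProbabilityMeasure p₀]
    (hp₀ : p₀ ((Set.Icc 0 M)ᶜ) = 0)
    (hf : ∃ f : ℝ → ℝ, Measurable f ∧
      pstar = q.withDensity fun x => ENNReal.ofReal (f x)) :
    ∀ ε : ℝ, 0 < ε → ∃ N : ℕ, ∀ i ≥ N, ∀ A : Set ℝ, MeasurableSet A →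
      |((evol w β q p₀ i) A).toReal - (pstar A).toReal| < ε := by
  obtain ⟨f, hf_meas, hf_eq⟩ := hf
  have hdsupp : (Measure.dirac M) ((Set.Icc 0 M)ᶜ) = 0 := by
    rw [Measure.dirac_apply' _ measurableSet_Icc.compl]
    simp [le_of_lt hM]
  set P := evol w β q p₀ with hP
  set Ph := evol w β q (Measure.dirac M) with hPh
  have hprop : ∀ i, IsProbabilityMeasure (P i) ∧ P i ((Set.Icc 0 M)ᶜ) = 0 :=
    evol_prob_supp M β hβ q hq w hw_nonneg hw_meas p₀ hp₀
  have hproph : ∀ i, IsProbabilityMeasure (Ph i) ∧ Ph i ((Set.Icc 0 M)ᶜ) = 0 :=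
    evol_prob_supp M β hβ q hq w hw_nonneg hw_meas (Measure.dirac M) hdsupp
  have hdom : ∀ i, (Ph i).restrict (Set.Ico 0 M) ≤ (P i).restrict (Set.Ico 0 M) :=
    evol_dom M hM β hβ q hq w hw_nonneg hw_meas hA1 p₀ hp₀
  set pm : ℕ → ℝ := fun i => ((P i) {M}).toReal with hpm
  set pmh : ℕ → ℝ := fun i => ((Ph i) {M}).toReal with hpmh
  set δ : ℕ → ℝ := fun i => pmh i - pm i with hδ
  have hβ1 : (0:ℝ) ≤ 1 - β := by linarith [hβ.2]
  have hpm_nonneg : ∀ i, 0 ≤ pm i := fun i => ENNReal.toReal_nonneg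
  have hpmh_le_one : ∀ i, pmh i ≤ 1 := fun i => by
    haveI := (hproph i).1
    have : ((Ph i) {M}).toReal ≤ (1 : ENNReal).toReal :=
      ENNReal.toReal_mono ENNReal.one_ne_top prob_le_one
    simpa using this
  have hIdom : ∀ i, ((Ph i) (Set.Ico 0 M)).toReal ≤ ((P i) (Set.Ico 0 M)).toReal := fun i => by
    haveI := (hprop i).1; haveI := (hproph i).1
    have := Measure.le_iff.mp (hdom i) (Set.Ico 0 M) measurableSet_Ico
    rw [Measure.restrict_apply measurableSet_Ico, Measure.restrict_apply measurableSet_Ico,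
      Set.inter_self] at this
    exact (ENNReal.toReal_le_toReal (measure_ne_top _ _) (measure_ne_top _ _)).mpr this
  have hδ_nonneg : ∀ i, 0 ≤ δ i := fun i => by
    haveI := (hprop i).1; haveI := (hproph i).1
    have h1 := mass_M M hM (P i) (hprop i).2
    have h2 := mass_M M hM (Ph i) (hproph i).2
    have := hIdom i
    simp only [hδ, hpm, hpmh]
    rw [h1, h2]
    linarith
  have hsel : ∀ i, sel w (Ph i) M ≤ sel w (P i) M := fun i =>
    hA1 (P i) (Ph i) (hprop i).1 (hproph i).1 (hprop i).2 (hproph i).2 (hdom i) M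
      ⟨le_of_lt hM, le_refl M⟩
  have hrec : ∀ i, pm (i+1) = (1-β) * sel w (P i) M * pm i + β * (q {M}).toReal := fun i => by
    haveI := (hprop i).1
    exact evol_singleton β hβ q p₀ w hw_nonneg M i
  have hrech : ∀ i, pmh (i+1) = (1-β) * sel w (Ph i) M * pmh i + β * (q {M}).toReal := fun i => by
    haveI := (hproph i).1
    exact evol_singleton β hβ q (Measure.dirac M) w hw_nonneg M i
  have hδstep : ∀ i, δ (i+1) ≤ (1-β) * sel w (Ph i) M * δ i := fun i => by
    have h1 := hrec i
    have h2 := hrech i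
    have h3 := hsel i
    have h4 := sel_nonneg w hw_nonneg (Ph i) M
    have h5 := hpm_nonneg i
    have key : (1-β) * sel w (Ph i) M * pm i ≤ (1-β) * sel w (P i) M * pm i :=
      mul_le_mul_of_nonneg_right (mul_le_mul_of_nonneg_left h3 hβ1) h5
    simp only [hδ]
    rw [h1, h2]
    ring_nf
    ring_nf at key
    linarith
  -- the δ → 0 claim
  have hδsmall : ∀ ε : ℝ, 0 < ε → ∃ N : ℕ, ∀ i ≥ N, δ i < ε := by
    by_cases hqM : q {M} = 0
    · have hps : pstar {M} = 0 := by
        rw [hf_eq, withDensity_apply _ (measurableSet_singleton M), lintegral_singleton, hqM,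
          mul_zero]
      intro ε hε
      obtain ⟨N, hN⟩ := hpstar ε hε
      refine ⟨N, fun i hi => ?_⟩
      have := hN i hi {M} (measurableSet_singleton M)
      rw [hps] at this
      simp only [ENNReal.toReal_zero, sub_zero] at this
      have hb : pmh i < ε := lt_of_le_of_lt (le_abs_self _) this
      have := hpm_nonneg i
      simp only [hδ]
      linarith
    · have hqMpos : 0 < (q {M}).toReal := ENNReal.toReal_pos hqM (measure_ne_top q _)
      have hqM1 : (q {M}).toReal ≤ 1 := by
        have : (q {M}).toReal ≤ (1 : ENNReal).toReal :=
          ENNReal.toReal_mono ENNReal.one_ne_top prob_le_one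
        simpa using this
      set γ : ℝ := 1 - β * (q {M}).toReal with hγ
      have hβq1 : β * (q {M}).toReal < 1 := by nlinarith [hβ.1, hβ.2]
      have hβq0 : 0 < β * (q {M}).toReal := mul_pos hβ.1 hqMpos
      have hγ0 : 0 ≤ γ := by simp only [hγ]; linarith
      have hγ1 : γ < 1 := by simp only [hγ]; linarith
      have key : ∀ i, δ i ≤ γ^i * pmh i := by
        intro i
        induction i with
        | zero =>
          have := hpm_nonneg 0
          simp only [hδ, pow_zero, one_mul]
          linarith
        | succ i ihk =>
          have h4 := sel_nonneg w hw_nonneg (Ph i) M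
          calc δ (i+1) ≤ (1-β) * sel w (Ph i) M * δ i := hδstep i
            _ ≤ (1-β) * sel w (Ph i) M * (γ^i * pmh i) :=
              mul_le_mul_of_nonneg_left ihk (mul_nonneg hβ1 h4)
            _ = γ^i * ((1-β) * sel w (Ph i) M * pmh i) := by ring
            _ = γ^i * (pmh (i+1) - β * (q {M}).toReal) := by rw [hrech i]; ring
            _ ≤ γ^i * (γ * pmh (i+1)) := by
                refine mul_le_mul_of_nonneg_left ?_ (pow_nonneg hγ0 i)
                have h6 := hpmh_le_one (i+1)
                simp only [hγ]
                nlinarith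
            _ = γ^(i+1) * pmh (i+1) := by ring
      intro ε hε
      have htend : Tendsto (fun i : ℕ => γ^i) atTop (nhds 0) :=
        tendsto_pow_atTop_nhds_zero_of_lt_one hγ0 hγ1
      have hev : ∀ᶠ i in atTop, γ^i < ε := (tendsto_order.mp htend).2 ε hε
      obtain ⟨N, hN⟩ := eventually_atTop.mp hev
      refine ⟨N, fun i hi => ?_⟩
      have h1 := key i
      have h2 : γ^i * pmh i ≤ γ^i := by
        have := hpmh_le_one i
        have h3 : (0:ℝ) ≤ pmh i := ENNReal.toReal_nonneg
        nlinarith [pow_nonneg hγ0 i]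
      linarith [hN i hi]
  -- assembly
  intro ε hε
  obtain ⟨N1, hN1⟩ := hpstar (ε/2) (by linarith)
  obtain ⟨N2, hN2⟩ := hδsmall (ε/2) (by linarith)
  refine ⟨max N1 N2, fun i hi A hA => ?_⟩
  haveI := (hprop i).1; haveI := (hproph i).1
  have h1 := hN1 i (le_trans (le_max_left _ _) hi) A hA
  have h2 : |((P i) A).toReal - ((Ph i) A).toReal| ≤ δ i :=
    tv_bound M hM (Ph i) (P i) (hproph i).2 (hprop i).2 (hdom i) A hA
  have h3 := hN2 i (le_trans (le_max_right _ _) hi)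
  calc |((P i) A).toReal - (pstar A).toReal|
      ≤ |((P i) A).toReal - ((Ph i) A).toReal| + |((Ph i) A).toReal - (pstar A).toReal| :=
        abs_sub_le _ _ _
    _ < ε/2 + ε/2 := add_lt_add_of_le_of_lt (le_of_lt (lt_of_le_of_lt h2 h3)) h1
    _ = ε := by ring

/-- Corollary "forking" of the paper. Under Assumption 1, for any `p₀`, `q`:
if `p*(dx) = f(x) q(dx)` for some Borel measurable `f`, then `(p_i)` converges in total
variation to `p*`. -/
theorem stmt9 (M : ℝ) (hM : 0 < M) (β : ℝ) (hβ : β ∈ Set.Ioo (0:ℝ) 1)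
    (q : MeasureTheory.Measure ℝ) [IsProbabilityMeasure q] (hq : q ((Set.Icc 0 M)ᶜ) = 0)
    (w : ℝ → MeasureTheory.Measure ℝ → ℝ)
    (hw_nonneg : ∀ x u, 0 ≤ w x u)
    (hw_meas : ∀ u, Measurable fun x => w x u)
    (hA1 : Assumption1 M w)
    (pstar : MeasureTheory.Measure ℝ) [IsProbabilityMeasure pstar]
    (hpstar : TendstoTV (evol w β q (MeasureTheory.Measure.dirac M)) pstar)
    (p₀ : MeasureTheory.Measure ℝ) [IsProbabilityMeasure p₀]
    (hp₀ : p₀ ((Set.Icc 0 M)ᶜ) = 0)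
    (hf : ∃ f : ℝ → ℝ, Measurable f ∧
      pstar = q.withDensity fun x => ENNReal.ofReal (f x)) :
    TendstoTV (evol w β q p₀) pstar := by
  intro ε hε
  exact stmt9' M hM β hβ q hq w hw_nonneg hw_meas hA1 pstar hpstar p₀ hp₀ hf ε hε
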